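/- For every 3-CNF formula ψ, the formula ψ is satisfiable if and only if there exists a Boolean well-defined valuation val of the positive-reachability pMC E_ψ such that Pr_{E_ψ[val]}(◇{c_{m+1}}) > 0. -/

import Mathlib

/-- A finite path in state space `S`: a length `m` together with `m + 1` states. -/
abbrev MCPath (S : Type) : Type := Σ m : ℕ, Fin (m + 1) → S

/-- The mass of a path: the product of the transition probabilities along it. -/
def pathMass {S : Type} (P : S → S → ℝ) (π : MCPath S) : ℝ :=
  ∏ i : Fin π.1, P (π.2 i.castSucc) (π.2 i.succ)

/-- A hitting path from `s` to `T`: it starts in `s`, ends in `T`, and no proper prefix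
visits `T`. -/
def IsHitting {S : Type} (T : Set S) (s : S) (π : MCPath S) : Prop :=
  π.2 0 = s ∧ π.2 (Fin.last π.1) ∈ T ∧ ∀ i : Fin π.1, π.2 i.castSucc ∉ T

/-- The reachability probability `Pr_{P,s}(◇T)`: the sum of the masses of all hitting
paths from `s` to `T`. -/
noncomputable def reachProb {S : Type} (P : S → S → ℝ) (T : Set S) (s : S) : ℝ :=
  ∑' π : {π : MCPath S // IsHitting T s π}, pathMass P π.1

/-- A literal is a polarity (`true` = positive) together with a variable index. -/
abbrev Lit (k : ℕ) : Type := Bool × Fin k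

/-- Boolean evaluation of a literal under a Boolean assignment. -/
def litBool {k : ℕ} (σ : Fin k → Bool) (l : Lit k) : Bool :=
  if l.1 then σ l.2 else !(σ l.2)

/-- States of the positive-reachability pMC `E_ψ`: clause states `c₁,…,c_{m+1}`, literal
states `l_{i,j}` and a sink `⊥`. -/
inductive EState (m : ℕ) where
  | clause : Fin (m + 1) → EState m
  | lit : Fin m → Fin 3 → EState m
  | sink : EState m
deriving DecidableEq

/-- Parameters of `E_ψ`: `x̃` for each variable and `y_{i,j}` for each clause `i` and literal
position `j`. -/
inductive EParam (k m : ℕ) where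
  | xt : Fin k → EParam k m
  | y : Fin m → Fin 3 → EParam k m
deriving DecidableEq

open MvPolynomial in
/-- Encoding of a literal: `enc(x) = x̃`, `enc(¬x) = 1 - x̃`. -/
noncomputable def encLit {k m : ℕ} (l : Lit k) : MvPolynomial (EParam k m) ℚ :=
  if l.1 then X (.xt l.2) else 1 - X (.xt l.2)

open MvPolynomial in
/-- Transition polynomials of the positive-reachability pMC `E_ψ` for a 3-CNF formula `ψ`:
`𝒫(c_i, l_{i,j}) = y_{i,j}`, `𝒫(l_{i,j}, c_{i+1}) = enc(l_{i,j})`,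
`𝒫(l_{i,j}, ⊥) = 1 - enc(l_{i,j})`, and probability-one self-loops at `c_{m+1}` and `⊥`. -/
noncomputable def posReachP (k m : ℕ) (ψ : Fin m → Fin 3 → Lit k) :
    EState m → EState m → MvPolynomial (EParam k m) ℚ
  | .clause i, .lit a j => if (i : ℕ) = (a : ℕ) then X (.y a j) else 0
  | .lit a j, .clause i => if (i : ℕ) = (a : ℕ) + 1 then encLit (ψ a j) else 0
  | .lit a j, .sink => 1 - encLit (ψ a j)
  | .clause i, .clause i' => if (i : ℕ) = m ∧ (i' : ℕ) = m then 1 else 0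
  | .sink, .sink => 1
  | _, _ => 0

/-- A Boolean well-defined valuation of the parameters of `E_ψ`: every parameter gets a value
in `{0,1}` and `y_{i,1} + y_{i,2} + y_{i,3} = 1` for every clause `i`. -/
def EBoolWD {k m : ℕ} (val : EParam k m → ℝ) : Prop :=
  (∀ p, val p = 0 ∨ val p = 1) ∧
  ∀ i : Fin m, val (.y i 0) + val (.y i 1) + val (.y i 2) = 1

open MvPolynomial

section helpers
variable {k m : ℕ} (ψ : Fin m → Fin 3 → Lit k) (val : EParam k m → ℝ)

lemma Pv_clause_lit (i : Fin (m+1)) (a : Fin m) (j : Fin 3) :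
    (aeval val (posReachP k m ψ (.clause i) (.lit a j)) : ℝ)
      = if (i:ℕ) = a then val (.y a j) else 0 := by
  simp [posReachP, apply_ite (aeval val)]

lemma Pv_lit_clause (i : Fin (m+1)) (a : Fin m) (j : Fin 3) :
    (aeval val (posReachP k m ψ (.lit a j) (.clause i)) : ℝ)
      = if (i:ℕ) = a + 1 then aeval val (encLit (ψ a j)) else 0 := by
  simp [posReachP, apply_ite (aeval val)]

lemma Pv_lit_sink (a : Fin m) (j : Fin 3) :
    (aeval val (posReachP k m ψ (.lit a j) .sink) : ℝ)
      = 1 - aeval val (encLit (ψ a j)) := by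
  simp [posReachP]

lemma Pv_clause_clause (i i' : Fin (m+1)) :
    (aeval val (posReachP k m ψ (.clause i) (.clause i')) : ℝ)
      = if (i:ℕ) = m ∧ (i':ℕ) = m then 1 else 0 := by
  simp [posReachP, apply_ite (aeval val)]

lemma Pv_clause_sink (i : Fin (m+1)) :
    (aeval val (posReachP k m ψ (.clause i) .sink) : ℝ) = 0 := by
  simp [posReachP]

lemma Pv_sink_clause (i : Fin (m+1)) :
    (aeval val (posReachP k m ψ .sink (.clause i)) : ℝ) = 0 := by
  simp [posReachP]

lemma Pv_sink_lit (a : Fin m) (j : Fin 3) :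
    (aeval val (posReachP k m ψ .sink (.lit a j)) : ℝ) = 0 := by
  simp [posReachP]

lemma Pv_lit_lit (a a' : Fin m) (j j' : Fin 3) :
    (aeval val (posReachP k m ψ (.lit a j) (.lit a' j')) : ℝ) = 0 := by
  simp [posReachP]

lemma aeval_encLit_bool (h01 : ∀ v, val (EParam.xt v) = 0 ∨ val (.xt v) = 1) (l : Lit k) :
    (aeval val (encLit l : MvPolynomial (EParam k m) ℚ) : ℝ)
      = if litBool (fun v => decide (val (.xt v) = 1)) l then 1 else 0 := by
  obtain ⟨b, v⟩ := l
  cases b <;> rcases h01 v with h | h <;>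
    simp [encLit, litBool, h]

end helpers
section canon
variable {k m : ℕ}

noncomputable def fwdVal (σ : Fin k → Bool) (j : Fin m → Fin 3) : EParam k m → ℝ
  | .xt v => if σ v then 1 else 0
  | .y i j' => if j' = j i then 1 else 0

def canon (j : Fin m → Fin 3) (p : ℕ) : EState m :=
  if h : p / 2 < m then
    if p % 2 = 0 then .clause ⟨p / 2, Nat.lt_succ_of_lt h⟩ else .lit ⟨p / 2, h⟩ (j ⟨p / 2, h⟩)
  else .clause (Fin.last m)

lemma canon_even (j : Fin m → Fin 3) {t : ℕ} (ht : t ≤ m) :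
    canon j (2 * t) = .clause ⟨t, Nat.lt_succ_of_le ht⟩ := by
  have h2 : 2 * t / 2 = t := by omega
  have h3 : 2 * t % 2 = 0 := by omega
  rcases lt_or_eq_of_le ht with h | h
  · simp [canon, h2, h3, h]
  · subst h
    simp [canon, h2, Fin.last]

lemma canon_odd (j : Fin m → Fin 3) {t : ℕ} (ht : t < m) :
    canon j (2 * t + 1) = .lit ⟨t, ht⟩ (j ⟨t, ht⟩) := by
  have h2 : (2 * t + 1) / 2 = t := by omega
  have h3 : (2 * t + 1) % 2 = 1 := by omega
  simp [canon, h2, h3, ht]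

lemma fwdVal_xt (σ : Fin k → Bool) (j : Fin m → Fin 3) (v : Fin k) :
    fwdVal σ j (.xt v) = if σ v then 1 else 0 := rfl

lemma fwdVal_y (σ : Fin k → Bool) (j : Fin m → Fin 3) (a : Fin m) (j' : Fin 3) :
    fwdVal σ j (.y a j') = if j' = j a then 1 else 0 := rfl

lemma fwdVal_01 (σ : Fin k → Bool) (j : Fin m → Fin 3) :
    ∀ p, fwdVal σ j p = 0 ∨ fwdVal σ j p = 1 := by
  intro p
  cases p <;> dsimp [fwdVal] <;> split <;> simp

lemma aeval_encLit_fwd (σ : Fin k → Bool) (j : Fin m → Fin 3) (l : Lit k) :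
    (MvPolynomial.aeval (fwdVal σ j) (encLit l : MvPolynomial (EParam k m) ℚ) : ℝ)
      = if litBool σ l then 1 else 0 := by
  obtain ⟨b, v⟩ := l
  cases b <;> cases h : σ v <;> simp [encLit, litBool, h, fwdVal_xt]

end canon
section fwd
open MvPolynomial
variable {k m : ℕ} (ψ : Fin m → Fin 3 → Lit k)

lemma canon_ne_last (j : Fin m → Fin 3) {p : ℕ} (hp : p < 2 * m) :
    canon j p ≠ .clause (Fin.last m) := by
  have h2 : p / 2 < m := by omega
  unfold canon
  rw [dif_pos h2]
  split
  · simp only [ne_eq, EState.clause.injEq]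
    intro h
    have := congrArg Fin.val h
    simp [Fin.val_last] at this
    omega
  · simp

lemma canon_hitting (j : Fin m → Fin 3) :
    IsHitting {EState.clause (Fin.last m)} (.clause 0)
      (⟨2 * m, fun p => canon j p.val⟩ : MCPath (EState m)) := by
  refine ⟨?_, ?_, ?_⟩
  · show canon j (0 : Fin (2*m+1)).val = _
    have := canon_even j (t := 0) (Nat.zero_le m)
    simp only [Fin.val_zero, Nat.mul_zero] at this ⊢
    rw [this]
    congr 1
  · show canon j (Fin.last (2*m)).val ∈ _
    have := canon_even j (t := m) le_rfl
    simp only [Fin.val_last]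
    rw [this]
    rfl
  · intro i
    show canon j i.castSucc.val ∉ _
    simp only [Fin.coe_castSucc, Set.mem_singleton_iff]
    exact canon_ne_last j i.isLt

lemma fwd_mass_one (σ : Fin k → Bool) (j : Fin m → Fin 3)
    (hj : ∀ i, litBool σ (ψ i (j i)) = true) :
    pathMass (fun s s' => (aeval (fwdVal σ j) (posReachP k m ψ s s') : ℝ))
      ⟨2 * m, fun p => canon j p.val⟩ = 1 := by
  unfold pathMass
  apply Finset.prod_eq_one
  intro i _
  have hi : i.val < 2 * m := i.isLt
  simp only [Fin.coe_castSucc, Fin.val_succ]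
  rcases Nat.even_or_odd i.val with ⟨t, ht⟩ | ⟨t, ht⟩
  · have htm : t < m := by omega
    have h1 : (i : ℕ) = 2 * t := by omega
    rw [h1, canon_even j htm.le, show 2*t+1 = 2*t+1 from rfl, canon_odd j htm,
      Pv_clause_lit]
    simp [fwdVal_y]
  · have htm : t < m := by omega
    have h1 : (i : ℕ) = 2 * t + 1 := by omega
    have h2 : (i : ℕ) + 1 = 2 * (t + 1) := by omega
    rw [h1, show 2*t+1+1 = 2*(t+1) by omega, canon_odd j htm,
      canon_even j (by omega : t + 1 ≤ m), Pv_lit_clause]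
    rw [if_pos (by simp), aeval_encLit_fwd σ j, hj ⟨t, htm⟩]
    simp

end fwd
section steps
open MvPolynomial
variable {k m : ℕ} (ψ : Fin m → Fin 3 → Lit k) (val : EParam k m → ℝ)

lemma step_from_clause (c : Fin (m+1)) (hc : (c:ℕ) < m) (s' : EState m)
    (h : (aeval val (posReachP k m ψ (.clause c) s') : ℝ) ≠ 0) :
    ∃ (a : Fin m) (jj : Fin 3), (a:ℕ) = (c:ℕ) ∧ val (.y a jj) ≠ 0 ∧ s' = .lit a jj := by
  cases s' with
  | clause i' =>
    rw [Pv_clause_clause, if_neg (by omega)] at h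
    exact absurd rfl h
  | sink =>
    rw [Pv_clause_sink] at h
    exact absurd rfl h
  | lit a jj =>
    rw [Pv_clause_lit] at h
    by_cases hca : (c:ℕ) = (a:ℕ)
    · rw [if_pos hca] at h
      exact ⟨a, jj, hca.symm, h, rfl⟩
    · rw [if_neg hca] at h
      exact absurd rfl h

lemma step_from_sink (s' : EState m)
    (h : (aeval val (posReachP k m ψ .sink s') : ℝ) ≠ 0) : s' = .sink := by
  cases s' with
  | clause i' => rw [Pv_sink_clause] at h; exact absurd rfl h
  | lit a jj => rw [Pv_sink_lit] at h; exact absurd rfl h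
  | sink => rfl

lemma step_from_lit (h01 : ∀ p, val p = 0 ∨ val p = 1) (a : Fin m) (jj : Fin 3)
    (s' : EState m) (hs' : s' ≠ .sink)
    (h : (aeval val (posReachP k m ψ (.lit a jj) s') : ℝ) ≠ 0) :
    litBool (fun v => decide (val (.xt v) = 1)) (ψ a jj) = true ∧
      ∃ c : Fin (m+1), (c:ℕ) = (a:ℕ) + 1 ∧ s' = .clause c := by
  cases s' with
  | sink => exact absurd rfl hs'
  | lit a' jj' => rw [Pv_lit_lit] at h; exact absurd rfl h
  | clause i' =>
    rw [Pv_lit_clause] at h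
    by_cases hi : (i':ℕ) = (a:ℕ) + 1
    · rw [if_pos hi, aeval_encLit_bool val (fun v => h01 _)] at h
      cases hb : litBool (fun v => decide (val (.xt v) = 1)) (ψ a jj) with
      | false => rw [hb] at h; simp at h
      | true => exact ⟨rfl, i', hi, rfl⟩
    · rw [if_neg hi] at h
      exact absurd rfl h

lemma step_from_lit_fwd (σ : Fin k → Bool) (j : Fin m → Fin 3)
    (hj : ∀ i, litBool σ (ψ i (j i)) = true) (t : ℕ) (htm : t < m) (s' : EState m)
    (h : (aeval (fwdVal σ j)
        (posReachP k m ψ (.lit ⟨t, htm⟩ (j ⟨t, htm⟩)) s') : ℝ) ≠ 0) :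
    ∃ c : Fin (m+1), (c:ℕ) = t + 1 ∧ s' = .clause c := by
  cases s' with
  | sink =>
    rw [Pv_lit_sink, aeval_encLit_fwd, hj ⟨t, htm⟩] at h
    simp at h
  | lit a' jj' => rw [Pv_lit_lit] at h; exact absurd rfl h
  | clause i' =>
    rw [Pv_lit_clause] at h
    by_cases hi : (i':ℕ) = t + 1
    · exact ⟨i', hi, rfl⟩
    · rw [if_neg hi] at h
      exact absurd rfl h

end steps
section uniq
open MvPolynomial
variable {k m : ℕ} (ψ : Fin m → Fin 3 → Lit k)

lemma fwd_unique (σ : Fin k → Bool) (j : Fin m → Fin 3)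
    (hj : ∀ i, litBool σ (ψ i (j i)) = true)
    (π : MCPath (EState m))
    (hπ : IsHitting {EState.clause (Fin.last m)} (.clause 0) π)
    (hmass : pathMass
      (fun s s' => (aeval (fwdVal σ j) (posReachP k m ψ s s') : ℝ)) π ≠ 0) :
    π = ⟨2 * m, fun p => canon j p.val⟩ := by
  obtain ⟨n, f⟩ := π
  obtain ⟨h0, hlast, havoid⟩ := hπ
  dsimp only at h0 hlast havoid
  simp only [pathMass] at hmass
  have hfac : ∀ p (hp : p < n),
      (aeval (fwdVal σ j)
        (posReachP k m ψ (f ⟨p, by omega⟩) (f ⟨p+1, by omega⟩)) : ℝ) ≠ 0 := by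
    intro p hp
    have h := Finset.prod_ne_zero_iff.mp hmass ⟨p, hp⟩ (Finset.mem_univ _)
    simpa [Fin.castSucc_mk, Fin.succ_mk] using h
  have claim : ∀ p (hp : p ≤ n), f ⟨p, Nat.lt_succ_of_le hp⟩ = canon j p := by
    intro p
    induction p with
    | zero =>
      intro hp
      have hc : canon j 0 = .clause 0 := by
        have := canon_even j (t := 0) (Nat.zero_le m)
        simp only [Nat.mul_zero] at this
        rw [this]
        congr 1
      have he : (⟨0, Nat.lt_succ_of_le hp⟩ : Fin (n+1)) = 0 := Fin.ext (by simp)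
      rw [he, h0, hc]
    | succ p ih =>
      intro hp
      have hpn : p < n := by omega
      have hfp : f ⟨p, by omega⟩ = canon j p := ih (le_of_lt hpn)
      have hnt : canon j p ≠ .clause (Fin.last m) := by
        intro hT
        have hv := havoid ⟨p, hpn⟩
        rw [Fin.castSucc_mk] at hv
        apply hv
        rw [hfp, hT]
        exact Set.mem_singleton _
      have hfac' := hfac p hpn
      rw [hfp] at hfac'
      rcases Nat.even_or_odd p with ⟨t, ht⟩ | ⟨t, ht⟩
      · have hp2 : p = 2 * t := by omega
        subst hp2
        have htm : t < m := by
          by_contra hcon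
          apply hnt
          unfold canon
          rw [dif_neg (by omega)]
        rw [canon_even j htm.le] at hfac'
        obtain ⟨a, jj, ha, hy, hs'⟩ :=
          step_from_clause ψ (fwdVal σ j) ⟨t, by omega⟩ htm _ hfac'
        have hjj : jj = j a := by
          by_contra hne
          exact hy (by rw [fwdVal_y, if_neg hne])
        have ha' : a = ⟨t, htm⟩ := Fin.ext ha
        rw [canon_odd j htm, hs', hjj, ha']
      · have hp2 : p = 2 * t + 1 := by omega
        subst hp2
        have htm : t < m := by
          by_contra hcon
          apply hnt
          unfold canon
          rw [dif_neg (by omega)]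
        rw [canon_odd j htm] at hfac'
        obtain ⟨c, hc, hs'⟩ := step_from_lit_fwd ψ σ j hj t htm _ hfac'
        have hcanon : canon j (2*t+1+1) = .clause ⟨t+1, by omega⟩ := by
          rw [show 2*t+1+1 = 2*(t+1) by omega]
          exact canon_even j (by omega)
        rw [hcanon, hs']
        congr 1
        exact Fin.ext (by simp [hc])
  have h2m : 2 * m ≤ n := by
    by_contra hcon
    have hn' : n < 2 * m := by omega
    have hcl : f ⟨n, Nat.lt_succ_of_le le_rfl⟩ = canon j n := claim n le_rfl
    have hT : canon j n = .clause (Fin.last m) := by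
      rw [← hcl]
      exact Set.mem_singleton_iff.mp hlast
    exact canon_ne_last j hn' hT
  have hn : n = 2 * m := by
    by_contra hcon
    have h2m' : 2 * m < n := by omega
    have hv := havoid ⟨2 * m, h2m'⟩
    rw [Fin.castSucc_mk] at hv
    apply hv
    rw [claim (2*m) (by omega), canon_even j le_rfl]
    exact Set.mem_singleton _
  subst hn
  congr 1
  funext pp
  exact claim pp.val (by omega)
end uniq
section bwd
open MvPolynomial
variable {k m : ℕ} (ψ : Fin m → Fin 3 → Lit k)

lemma bwd_sat (val : EParam k m → ℝ) (h01 : ∀ p, val p = 0 ∨ val p = 1)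
    (π : MCPath (EState m))
    (hπ : IsHitting {EState.clause (Fin.last m)} (.clause 0) π)
    (hmass : pathMass
      (fun s s' => (aeval val (posReachP k m ψ s s') : ℝ)) π ≠ 0) :
    ∀ i : Fin m, ∃ jj : Fin 3,
      litBool (fun v => decide (val (.xt v) = 1)) (ψ i jj) = true := by
  obtain ⟨n, f⟩ := π
  obtain ⟨h0, hlast, havoid⟩ := hπ
  dsimp only at h0 hlast havoid
  simp only [pathMass] at hmass
  have hfac : ∀ p (hp : p < n),
      (aeval val (posReachP k m ψ (f ⟨p, by omega⟩) (f ⟨p+1, by omega⟩)) : ℝ) ≠ 0 := by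
    intro p hp
    have h := Finset.prod_ne_zero_iff.mp hmass ⟨p, hp⟩ (Finset.mem_univ _)
    simpa [Fin.castSucc_mk, Fin.succ_mk] using h
  have hflast : f ⟨n, Nat.lt_succ_self n⟩ = .clause (Fin.last m) :=
    Set.mem_singleton_iff.mp hlast
  have hsink : ∀ p (hp : p ≤ n), f ⟨p, Nat.lt_succ_of_le hp⟩ ≠ .sink := by
    intro p hp hs
    have prop : ∀ d (hd : p + d ≤ n), f ⟨p + d, Nat.lt_succ_of_le hd⟩ = .sink := by
      intro d
      induction d with
      | zero => intro _; exact hs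
      | succ d ih =>
        intro hd
        have h1 : f ⟨p + d, by omega⟩ = .sink := ih (by omega)
        have h2 := hfac (p + d) (by omega)
        rw [h1] at h2
        exact step_from_sink ψ val _ h2
    have hend := prop (n - p) (by omega)
    have he : (⟨p + (n - p), Nat.lt_succ_of_le (by omega)⟩ : Fin (n+1))
        = ⟨n, Nat.lt_succ_self n⟩ := Fin.ext (by simp; omega)
    rw [he, hflast] at hend
    exact nomatch hend
  have claim2 : ∀ p (hp : p ≤ n),
      (∃ c : Fin (m+1), p = 2 * (c:ℕ) ∧ f ⟨p, Nat.lt_succ_of_le hp⟩ = .clause c) ∨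
      (∃ (a : Fin m) (jj : Fin 3), p = 2 * (a:ℕ) + 1 ∧
        f ⟨p, Nat.lt_succ_of_le hp⟩ = .lit a jj ∧
        litBool (fun v => decide (val (.xt v) = 1)) (ψ a jj) = true) := by
    intro p
    induction p with
    | zero =>
      intro hp
      refine Or.inl ⟨0, by simp, ?_⟩
      have he : (⟨0, Nat.lt_succ_of_le hp⟩ : Fin (n+1)) = 0 := Fin.ext (by simp)
      rw [he, h0]
    | succ p ih =>
      intro hp
      have hpn : p < n := by omega
      have hfacp := hfac p hpn
      rcases ih hpn.le with ⟨c, hpc, hfc⟩ | ⟨a, jj, hpa, hfa, hlit⟩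
      · have hcm : (c:ℕ) < m := by
          rcases Nat.lt_or_ge (c:ℕ) m with h | h
          · exact h
          · exfalso
            have hceq : c = Fin.last m := Fin.ext (by simp [Fin.val_last]; omega)
            have hv := havoid ⟨p, hpn⟩
            rw [Fin.castSucc_mk] at hv
            apply hv
            rw [hfc, hceq]
            exact Set.mem_singleton _
        rw [hfc] at hfacp
        obtain ⟨a, jj, ha, hy, hs'⟩ := step_from_clause ψ val c hcm _ hfacp
        have hp1n : p + 1 < n := by
          rcases Nat.lt_or_ge (p+1) n with h | h
          · exact h
          · exfalso
            have hpe : p + 1 = n := by omega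
            have he : (⟨p + 1, by omega⟩ : Fin (n+1)) = ⟨n, Nat.lt_succ_self n⟩ :=
              Fin.ext (by simpa using hpe)
            rw [he, hflast] at hs'
            exact nomatch hs'
        have hfacp1 := hfac (p+1) hp1n
        rw [hs'] at hfacp1
        have hnsink : f ⟨p+1+1, by omega⟩ ≠ .sink := hsink (p+2) (by omega)
        obtain ⟨hlit, -⟩ := step_from_lit ψ val h01 a jj _ hnsink hfacp1
        exact Or.inr ⟨a, jj, by omega, hs', hlit⟩
      · rw [hfa] at hfacp
        have hnsink : f ⟨p+1, by omega⟩ ≠ .sink := hsink (p+1) (by omega)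
        obtain ⟨-, c, hc, hs'⟩ := step_from_lit ψ val h01 a jj _ hnsink hfacp
        exact Or.inl ⟨c, by omega, hs'⟩
  intro i
  rcases claim2 n le_rfl with ⟨c, hnc, hfc⟩ | ⟨a, jj, hna, hfa, -⟩
  · have hceq : c = Fin.last m := by
      have h' := hfc.symm.trans hflast
      exact EState.clause.inj h'
    have hn2m : n = 2 * m := by
      rw [hceq] at hnc
      simpa [Fin.val_last] using hnc
    rcases claim2 (2 * i.val + 1) (by omega) with ⟨c', hc', -⟩ | ⟨a, jj, ha, -, hlit⟩
    · omega
    · have hai : a = i := Fin.ext (by omega)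
      rw [hai] at hlit
      exact ⟨jj, hlit⟩
  · rw [hflast] at hfa
    exact nomatch hfa

end bwd
/-- Proposition 14 of the paper: a 3-CNF formula `ψ` is satisfiable iff some Boolean
well-defined valuation of the positive-reachability pMC `E_ψ` reaches the target `c_{m+1}`
from `c₁` with positive probability. -/
theorem threeSat_iff_posReach_positive (k m : ℕ) (ψ : Fin m → Fin 3 → Lit k) :
    (∃ σ : Fin k → Bool, ∀ i, ∃ j, litBool σ (ψ i j) = true) ↔
    (∃ val : EParam k m → ℝ, EBoolWD val ∧
      reachProb (fun s s' => (MvPolynomial.aeval val (posReachP k m ψ s s') : ℝ))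
        {EState.clause (Fin.last m)} (EState.clause 0) > 0) := by
  constructor
  · rintro ⟨σ, hs⟩
    choose j hj using hs
    refine ⟨fwdVal σ j, ⟨fwdVal_01 σ j, ?_⟩, ?_⟩
    · intro i
      rcases hji : j i with ⟨jv, hjv⟩
      rw [fwdVal_y, fwdVal_y, fwdVal_y, hji]
      interval_cases jv <;> simp [Fin.ext_iff]
    · unfold reachProb
      rw [tsum_eq_single
        (⟨⟨2*m, fun p => canon j p.val⟩, canon_hitting j⟩ :
          {π : MCPath (EState m) // IsHitting {EState.clause (Fin.last m)} (EState.clause 0) π})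
        ?_]
      · rw [show ((⟨⟨2*m, fun p => canon j p.val⟩, canon_hitting j⟩ :
          {π : MCPath (EState m) // IsHitting {EState.clause (Fin.last m)} (EState.clause 0) π}) : _).1
            = ⟨2*m, fun p => canon j p.val⟩ from rfl,
          fwd_mass_one ψ σ j hj]
        norm_num
      · rintro ⟨π', hπ'⟩ hne
        by_contra h0
        exact hne (Subtype.ext (fwd_unique ψ σ j hj π' hπ' h0))
  · rintro ⟨val, ⟨h01, -⟩, hpos⟩
    have hex : ∃ π : {π : MCPath (EState m) //
        IsHitting {EState.clause (Fin.last m)} (EState.clause 0) π},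
        pathMass (fun s s' => (MvPolynomial.aeval val (posReachP k m ψ s s') : ℝ)) π.1 ≠ 0 := by
      by_contra hc
      push_neg at hc
      unfold reachProb at hpos
      rw [tsum_congr hc, tsum_zero] at hpos
      exact lt_irrefl 0 hpos
    obtain ⟨⟨π, hπ⟩, hm⟩ := hex
    exact ⟨_, bwd_sat ψ val h01 π hπ hm⟩
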